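/- Let d ≥ 2 and let A_0,…,A_{k+1} be a sequence of well-folded hyperorthogonal curves constructed by inflation, where σ_{k,i} is the signed permutation with C_{k,i} = σ_{k,i}(G(d)) modulo translation. Then for every axis a ∈ {1,…,d} and every vertex v_i of A_k, depth(σ_{k,i}, a) ≤ edgedist(A_k, v_i, a). -/

import Mathlib

open MeasureTheory

/-! ## Basic objects: points of `ℤ^d` (indexed by coordinates `1,…,d`), directions,
Gray codes, curves on the grid, inflation, well-foldedness, hyperorthogonality. -/

/-- A point of the grid `ℤ^d`; only coordinates `1,…,d` are meaningful
(coordinate `0` and coordinates `> d` are kept equal to `0`). -/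
abbrev Pt : Type := ℕ → ℤ

def ptZero : Pt := fun _ => 0

/-- `flipped i = 1` if `i < 0`, and `0` otherwise. -/
def flipped (i : ℤ) : ℤ := if i < 0 then 1 else 0

/-- Reversal of a free curve (sequence of directions): reverse the order and
negate every direction. -/
def grayRev (l : List ℤ) : List ℤ := (l.map (fun x => -x)).reverse

/-- The Gray-code free curve `G(d)`: `G(0)` is empty and `G(d)` is the
concatenation of `G(d-1)`, the single direction `d`, and the reverse of `G(d-1)`. -/
def G : ℕ → List ℤ
  | 0 => []
  | d + 1 => G d ++ [((d : ℤ) + 1)] ++ grayRev (G d)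

/-- Moving a point one step in direction `e`: coordinate `|e|` changes by `sgn e`. -/
def move (v : Pt) (e : ℤ) : Pt := fun j => if j = e.natAbs then v j + e.sign else v j

/-- The vertices of the path starting at `start` whose successive edge
directions are given by `dirs`. -/
def pathVertices (start : Pt) (dirs : List ℤ) : List Pt := dirs.scanl move start

/-- `e` is a valid direction in `d` dimensions: `e ∈ {−d,…,−1,1,…,d}`. -/
def IsDir (d : ℕ) (e : ℤ) : Prop := e ≠ 0 ∧ e.natAbs ≤ d

/-- The (ordered) pair `(v,w)` is an edge with direction `e`. -/
def HasDir (d : ℕ) (v w : Pt) (e : ℤ) : Prop := IsDir d e ∧ w = move v e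

/-- `(v,w)` is an edge of the grid. -/
def IsEdge (d : ℕ) (v w : Pt) : Prop := ∃ e, HasDir d v w e

/-- A curve on the grid: a finite sequence of distinct points in which each pair of
consecutive points differs by `±1` in exactly one coordinate. -/
def IsGridCurve (d : ℕ) (c : List Pt) : Prop := c.Nodup ∧ c.Chain' (IsEdge d)

/-- Membership in the cube `{0,…,2^k−1}^d` (unused coordinates are `0`). -/
def InCube (d k : ℕ) (v : Pt) : Prop :=
  (∀ j, 1 ≤ j → j ≤ d → 0 ≤ v j ∧ v j < 2 ^ k) ∧ (∀ j, j = 0 ∨ d < j → v j = 0)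

/-- A `k`-curve: a Hamiltonian path on the grid `{0,…,2^k−1}^d`. -/
def IsKCurve (d k : ℕ) (c : List Pt) : Prop :=
  IsGridCurve d c ∧ ∀ v : Pt, v ∈ c ↔ InCube d k v

/-- A signed permutation of `{−d,…,−1,1,…,d}`: a bijection `σ` of this set
with `σ(−k) = −σ(k)` (bundled with its inverse). -/
structure SignedPerm (d : ℕ) where
  f : ℤ → ℤ
  inv : ℤ → ℤ
  maps : ∀ i : ℤ, IsDir d i → IsDir d (f i)
  maps_inv : ∀ i : ℤ, IsDir d i → IsDir d (inv i)
  neg : ∀ i : ℤ, f (-i) = -f i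
  neg_inv : ∀ i : ℤ, inv (-i) = -inv i
  left_inv : ∀ i : ℤ, IsDir d i → inv (f i) = i
  right_inv : ∀ i : ℤ, IsDir d i → f (inv i) = i

/-- The 1-curve `σ(G(d))` (an isometric image of the Gray-code curve) placed in the
cube `2·v + {0,1}^d`; its entry corner is forced to be
`2·v + (flipped(σ⁻¹(1)),…,flipped(σ⁻¹(d)))`. -/
def grayPiece (d : ℕ) (σ : SignedPerm d) (v : Pt) : List Pt :=
  pathVertices (fun j => 2 * v j + if 1 ≤ j ∧ j ≤ d then flipped (σ.inv (j : ℤ)) else 0)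
    ((G d).map σ.f)

/-- `B` is obtained from `A` by (well-folded) inflation: each vertex of `A` is
replaced by an isometric image of `G(d)` in the corresponding subcube, and the
result is a valid curve on the grid. (Reversed images of `G(d)` are themselves
images of `G(d)` under another signed permutation, so no generality is lost.) -/
def IsInflationWF (d : ℕ) (A B : List Pt) : Prop :=
  ∃ σ : ℕ → SignedPerm d,
    B = ((List.range A.length).map (fun i => grayPiece d (σ i) (A.getD i ptZero))).flatten ∧
    IsGridCurve d B

/-- A curve is well-folded if it is a single vertex or is obtained by inflation from a
well-folded curve, every inserted 1-curve being an isometric image of `G(d)`. -/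
inductive WellFolded (d : ℕ) : List Pt → Prop
  | single (v : Pt) : WellFolded d [v]
  | inflate {A B : List Pt} : WellFolded d A → IsInflationWF d A B → WellFolded d B

/-- The set of axes in which `v` and `w` differ (for a grid edge this is the
singleton of its axis). -/
def axesOfEdge (d : ℕ) (v w : Pt) : Finset ℕ :=
  (Finset.range (d + 1)).filter (fun j => v j ≠ w j)

/-- Hyperorthogonality: for every `n ∈ {0,…,d−2}`, every `2^n` consecutive
edges of the curve have exactly `n+1` distinct axes. -/
def Hyperorthogonal (d : ℕ) (c : List Pt) : Prop :=
  ∀ n, n ≤ d - 2 → ∀ s, s + 2 ^ n + 1 ≤ c.length →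
    ((Finset.range (2 ^ n)).biUnion
      (fun t => axesOfEdge d (c.getD (s + t) ptZero) (c.getD (s + t + 1) ptZero))).card = n + 1

/-- The depth of a direction `a` in a signed permutation `σ`:
`0` if `|a| ∈ {|σ(d)|,|σ(d−1)|}`, and otherwise the number `j` with `|σ(d−1−j)| = |a|`. -/
def depth (d : ℕ) (σ : SignedPerm d) (a : ℤ) : ℕ :=
  if (σ.inv a).natAbs = d ∨ (σ.inv a).natAbs = d - 1 then 0 else d - 1 - (σ.inv a).natAbs

/-- The (signed) direction of the edge from `v` to `w`
(for a grid edge with axis `j` this is `±j`). -/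
def dirOf (d : ℕ) (v w : Pt) : ℤ :=
  ∑ j ∈ (Finset.range (d + 1)).filter (fun j => v j ≠ w j), (j : ℤ) * (w j - v j)

/-- The axis of the edge from `v` to `w`. -/
def axisOf (d : ℕ) (v w : Pt) : ℕ := (dirOf d v w).natAbs

/-! ## Extended curves -/

/-- For the extended curve with entry-edge direction `en`, vertex list `c` and
exit-edge direction `ex`, the axis of its `t`-th edge, where the entry edge has
index `0`, the internal edges have indices `1,…,c.length − 1` (edge `t` joins
`c[t−1]` and `c[t]`) and the exit edge has index `c.length`. -/
def axE (d : ℕ) (en : ℤ) (c : List Pt) (ex : ℤ) (t : ℕ) : ℕ :=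
  if t = 0 then en.natAbs
  else if t = c.length then ex.natAbs
  else axisOf d (c.getD (t - 1) ptZero) (c.getD t ptZero)

/-- The edge distance of the axis `a` to the vertex with index `p` within the
extended curve `(en, c, ex)`: one less than the number of edges of the smallest
contiguous subcurve containing this vertex and an edge with axis `a`. -/
noncomputable def edgedistE (d : ℕ) (en : ℤ) (c : List Pt) (ex : ℤ) (p a : ℕ) : ℕ :=
  sInf {m | ∃ t, t ≤ c.length ∧ axE d en c ex t = a ∧
    m = if t ≤ p then p - t else t - p - 1}

/-- Hyperorthogonality of an extended curve: every `2^n` consecutive edges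
(including the entry and exit edges) have exactly `n+1` distinct axes, for all
`n ∈ {0,…,d−2}`. -/
def HyperorthogonalE (d : ℕ) (en : ℤ) (c : List Pt) (ex : ℤ) : Prop :=
  ∀ n, n ≤ d - 2 → ∀ s, s + 2 ^ n ≤ c.length + 1 →
    ((Finset.range (2 ^ n)).image (fun t => axE d en c ex (s + t))).card = n + 1

/-- The sequence of approximating curves determined by a system of signed
permutations `σ k i` (one for each vertex `i` of the `k`-th curve):
`A_0` is the single vertex at the origin and `A_{k+1}` is obtained from `A_k` by
inflation, vertex `i` being replaced by the 1-curve `σ_{k,i}(G(d))`. -/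
def buildCurve (d : ℕ) (σ : ℕ → ℕ → SignedPerm d) : ℕ → List Pt
  | 0 => [ptZero]
  | k + 1 =>
    ((List.range (buildCurve d σ k).length).map
      (fun i => grayPiece d (σ k i) ((buildCurve d σ k).getD i ptZero))).flatten

/-- `f : [0,1] → [0,1]^d` is the space-filling curve approximated by the curves
`A k`: the `i`-th vertex of `A k` corresponds to the cube `2^{−k}(v_{k,i} + [0,1]^d)`,
and `f` maps `[i/2^{dk},(i+1)/2^{dk}]` into that cube. -/
def Approximates (d : ℕ) (A : ℕ → List Pt) (f : ℝ → Fin d → ℝ) : Prop :=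
  ∀ k i, i < (A k).length → ∀ t : ℝ,
    (i : ℝ) / 2 ^ (d * k) ≤ t → t ≤ ((i : ℝ) + 1) / 2 ^ (d * k) →
    ∀ j : Fin d,
      ((((A k).getD i ptZero) ((j : ℕ) + 1) : ℝ) / 2 ^ k ≤ f t j ∧
        f t j ≤ ((((A k).getD i ptZero) ((j : ℕ) + 1) : ℝ) + 1) / 2 ^ k)

/-- The smallest axis-aligned box containing a (nonempty, bounded) set `S ⊆ ℝ^d`. -/
noncomputable def bbox (d : ℕ) (S : Set (Fin d → ℝ)) : Set (Fin d → ℝ) :=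
  Set.univ.pi fun j => Set.Icc (sInf ((fun p => p j) '' S)) (sSup ((fun p => p j) '' S))

/-! ## General inflation (arbitrary 1-curves), isometric copies, self-similarity -/

/-- `c` is a 1-curve on the translated unit cube `2·base + {0,1}^d`. -/
def IsUnitCurveAt (d : ℕ) (base : Pt) (c : List Pt) : Prop :=
  IsGridCurve d c ∧
    ∀ v : Pt, v ∈ c ↔
      ((∀ j, 1 ≤ j → j ≤ d → v j = 2 * base j ∨ v j = 2 * base j + 1) ∧
        ∀ j, j = 0 ∨ d < j → v j = 2 * base j)

/-- `B` is obtained from `A` by (general) inflation: each vertex `v_i` of `A` is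
replaced by a 1-curve on `2·v_i + {0,1}^d`, and each edge of `A` with direction `e_i`
is replaced by an edge of the same direction connecting consecutive 1-curves. -/
def IsInflation (d : ℕ) (A B : List Pt) : Prop :=
  ∃ C : ℕ → List Pt,
    B = ((List.range A.length).map C).flatten ∧
    IsGridCurve d B ∧
    (∀ i, i < A.length → IsUnitCurveAt d (A.getD i ptZero) (C i)) ∧
    (∀ i, i + 1 < A.length → ∀ e : ℤ,
      HasDir d (A.getD i ptZero) (A.getD (i + 1) ptZero) e →
      HasDir d ((C i).getLastD ptZero) ((C (i + 1)).headD ptZero) e)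

/-- `InflationChain d k X`: `X` is constructed from a single vertex by `k` steps
of inflation. -/
inductive InflationChain (d : ℕ) : ℕ → List Pt → Prop
  | base (v : Pt) : InflationChain d 0 [v]
  | step {k : ℕ} {A B : List Pt} :
      InflationChain d k A → IsInflation d A B → InflationChain d (k + 1) B

/-- The hyperoctahedral symmetry of the cube `{0,…,M}^d` given by the signed
permutation `σ`: the coordinate `|σ⁻¹(j)|` of the argument is sent to coordinate `j`,
reflected (`x ↦ M − x`) whenever `σ⁻¹(j) < 0`. -/
def applySP (d : ℕ) (M : ℤ) (σ : SignedPerm d) (x : Pt) : Pt :=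
  fun j =>
    if 1 ≤ j ∧ j ≤ d then
      if 0 ≤ σ.inv (j : ℤ) then x (σ.inv (j : ℤ)).natAbs
      else M - x (σ.inv (j : ℤ)).natAbs
    else x j

/-- `B` is an isometric copy of the curve `A` (living in a cube `{0,…,M}^d`):
a hyperoctahedral symmetry, possibly composed with reversal, followed by a translation. -/
def IsometricCopy (d : ℕ) (M : ℤ) (A B : List Pt) : Prop :=
  ∃ σ : SignedPerm d, ∃ rev : Bool, ∃ tr : Pt,
    B = (if rev then A.reverse else A).map (fun v => fun j => applySP d M σ v j + tr j)

/-- Self-similarity of one approximation step: `B` is the concatenation of `2^d`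
isometric copies of the `k`-curve `A`, connected by single edges. -/
def SelfSimilarStep (d k : ℕ) (A B : List Pt) : Prop :=
  ∃ parts : ℕ → List Pt,
    B = ((List.range (2 ^ d)).map parts).flatten ∧
    IsGridCurve d B ∧
    ∀ m, m < 2 ^ d → IsometricCopy d ((2 : ℤ) ^ k - 1) A (parts m)

/-- Coordinate `a ∈ {1,…,d}` of a point of `ℝ^d`. -/
noncomputable def coordR (d : ℕ) (x : Fin d → ℝ) (a : ℕ) : ℝ :=
  if h : a - 1 < d then x ⟨a - 1, h⟩ else 0

/-- The hyperoctahedral symmetry of the unit cube `[0,1]^d` given by the signed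
permutation `σ`. -/
noncomputable def applySPR (d : ℕ) (σ : SignedPerm d) (x : Fin d → ℝ) : Fin d → ℝ :=
  fun j =>
    if 0 ≤ σ.inv ((j : ℕ) + 1 : ℤ) then coordR d x (σ.inv ((j : ℕ) + 1 : ℤ)).natAbs
    else 1 - coordR d x (σ.inv ((j : ℕ) + 1 : ℤ)).natAbs

/-- `f` is a self-similar hyperorthogonal well-folded space-filling curve:
it is approximated by a sequence of `k`-curves, starting from a single vertex,
in which each curve is obtained from the previous one by well-folded inflation,
all approximating curves are hyperorthogonal, and each approximating curve is the
concatenation of `2^d` isometric copies of the previous one. -/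
def SSHOWFcurve (d : ℕ) (f : ℝ → Fin d → ℝ) : Prop :=
  ∃ A : ℕ → List Pt,
    A 0 = [ptZero] ∧
    (∀ k, IsInflationWF d (A k) (A (k + 1))) ∧
    (∀ k, IsKCurve d k (A k)) ∧
    (∀ k, Hyperorthogonal d (A k)) ∧
    (∀ k, SelfSimilarStep d k (A k) (A (k + 1))) ∧
    Approximates d A f

/-- Two space-filling curves are the same up to hyperoctahedral symmetry and
reversal. -/
def curveEquiv (d : ℕ) (f g : ℝ → Fin d → ℝ) : Prop :=
  ∃ τ : SignedPerm d,
    (∀ t ∈ Set.Icc (0 : ℝ) 1, g t = applySPR d τ (f t)) ∨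
    (∀ t ∈ Set.Icc (0 : ℝ) 1, g t = applySPR d τ (f (1 - t)))

/-- The direction of the entry edge of the extended child curve `C'_m` within the
inflation of the extended curve `(e0, A, e1)`. -/
def childEntryDir (d : ℕ) (A : List Pt) (e0 : ℤ) (m : ℕ) : ℤ :=
  if m = 0 then e0 else dirOf d (A.getD (m - 1) ptZero) (A.getD m ptZero)

/-- The direction of the exit edge of the extended child curve `C'_m` within the
inflation of the extended curve `(e0, A, e1)`. -/
def childExitDir (d : ℕ) (A : List Pt) (e1 : ℤ) (m : ℕ) : ℤ :=
  if m + 1 = A.length then e1 else dirOf d (A.getD m ptZero) (A.getD (m + 1) ptZero)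

/-- The local edge distance of the axis `a` to the vertex with index `i` within the
extended approximating curve `A'_k` (entry direction `e0`, exit direction `e1`)
of the system `σ`: the edge distance within the extended child curve of `A'_{k-1}`
containing this vertex. -/
noncomputable def led (d : ℕ) (σ : ℕ → ℕ → SignedPerm d) (e0 e1 : ℤ) :
    ℕ → ℕ → ℕ → ℕ
  | 0, _, a => edgedistE d e0 (buildCurve d σ 0) e1 0 a
  | k + 1, i, a =>
    edgedistE d (childEntryDir d (buildCurve d σ k) e0 (i / 2 ^ d))
      (grayPiece d (σ k (i / 2 ^ d)) ((buildCurve d σ k).getD (i / 2 ^ d) ptZero))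
      (childExitDir d (buildCurve d σ k) e1 (i / 2 ^ d))
      (i % 2 ^ d) a

/-- The system of permutations `σ` describes a sequence of extended hyperorthogonal
well-folded approximating curves with entry direction `e0` and exit direction `e1`,
in which the signs of `σ_{k,1}⁻¹` are prescribed by `s`, and the elements of every
unsigned permutation `|σ_{k,i}|` are sorted by decreasing local edge distance. -/
def GoodSystem (d : ℕ) (e0 e1 : ℤ) (s : ℕ → ℕ → ℤ) (σ : ℕ → ℕ → SignedPerm d) : Prop :=
  (∀ k, IsKCurve d k (buildCurve d σ k)) ∧
  (∀ k, HyperorthogonalE d e0 (buildCurve d σ k) e1) ∧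
  (∀ k, ¬ InCube d k (move ((buildCurve d σ k).headD ptZero) (-e0))) ∧
  (∀ k, ¬ InCube d k (move ((buildCurve d σ k).getLastD ptZero) e1)) ∧
  (∀ k j, 1 ≤ j → j ≤ d → Int.sign ((σ k 0).inv (j : ℤ)) = s k j) ∧
  (∀ k i, i < (buildCurve d σ k).length →
    ∀ p q : ℕ, 1 ≤ p → p ≤ q → q ≤ d →
      led d σ e0 e1 k i (((σ k i).f (q : ℤ)).natAbs) ≤
        led d σ e0 e1 k i (((σ k i).f (p : ℤ)).natAbs))

/-- The Butz-Moore generalization of the Hilbert curve, described by the conditions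
on its system of signed permutations: `|σ_{k,i}(d)| = 1` for the first and last
subcube, `|σ_{k,i}(d)| = max(|e_{k,i−1}|,|e_{k,i}|)` in between, all unsigned
permutations are cyclic rotations, and the entry is at the origin. -/
def ButzMoore (d : ℕ) (σ : ℕ → ℕ → SignedPerm d) : Prop :=
  (∀ k, IsKCurve d k (buildCurve d σ k)) ∧
  (∀ k i, i < 2 ^ (d * k) → (i = 0 ∨ i = 2 ^ (d * k) - 1) →
    ((σ k i).f (d : ℤ)).natAbs = 1) ∧
  (∀ k i, 0 < i → i + 1 < 2 ^ (d * k) →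
    ((σ k i).f (d : ℤ)).natAbs =
      max (dirOf d ((buildCurve d σ k).getD (i - 1) ptZero)
            ((buildCurve d σ k).getD i ptZero)).natAbs
          (dirOf d ((buildCurve d σ k).getD i ptZero)
            ((buildCurve d σ k).getD (i + 1) ptZero)).natAbs) ∧
  (∀ k i j, 1 ≤ j → j ≤ d →
    ((σ k i).f (j : ℤ)).natAbs = ((((σ k i).f (d : ℤ)).natAbs + j - 1) % d) + 1) ∧
  (∀ k j, 1 ≤ j → j ≤ d → 0 ≤ (σ k 0).inv (j : ℤ))

/-! ## Generalized curves (diagonal edges allowed) -/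

/-- A generalized edge: `w ≠ v` and every coordinate changes by at most 1. -/
def IsGenEdge (d : ℕ) (v w : Pt) : Prop :=
  v ≠ w ∧ (∀ j, 1 ≤ j → j ≤ d → |w j - v j| ≤ 1) ∧ ∀ j, j = 0 ∨ d < j → w j = v j

/-- A generalized curve on the grid (diagonal edges allowed). -/
def IsGenCurve (d : ℕ) (c : List Pt) : Prop := c.Nodup ∧ c.Chain' (IsGenEdge d)

/-- Generalized inflation: vertices are replaced by 1-curves on the corresponding
subcubes, consecutive 1-curves being joined by a single (possibly diagonal) edge. -/
def IsGenInflation (d : ℕ) (A B : List Pt) : Prop :=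
  ∃ C : ℕ → List Pt,
    B = ((List.range A.length).map C).flatten ∧
    IsGenCurve d B ∧
    (∀ i, i < A.length → IsUnitCurveAt d (A.getD i ptZero) (C i))

/-! ### Auxiliary lemmas for Statement 8 -/

section Stmt8Aux

lemma grayRev_length (l : List ℤ) : (grayRev l).length = l.length := by
  simp [grayRev]

lemma grayRev_append (l₁ l₂ : List ℤ) :
    grayRev (l₁ ++ l₂) = grayRev l₂ ++ grayRev l₁ := by
  simp [grayRev]

lemma grayRev_grayRev (l : List ℤ) : grayRev (grayRev l) = l := by
  simp [grayRev, List.map_reverse, List.map_map, Function.comp]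

lemma grayRev_singleton (x : ℤ) : grayRev [x] = [-x] := by
  simp [grayRev]

lemma mem_grayRev {l : List ℤ} {x : ℤ} : x ∈ grayRev l ↔ -x ∈ l := by
  simp only [grayRev, List.mem_reverse, List.mem_map]
  constructor
  · rintro ⟨a, ha, rfl⟩; simpa using ha
  · intro h; exact ⟨-x, h, by ring⟩

lemma G_length (d : ℕ) : (G d).length = 2 ^ d - 1 := by
  induction d with
  | zero => simp [G]
  | succ d ih =>
    have h1 : 1 ≤ 2 ^ d := Nat.one_le_two_pow
    have h2 : (2:ℕ) ^ (d+1) = 2 ^ d + 2 ^ d := by ring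
    simp [G, grayRev_length, ih]
    omega

lemma G_mem' (d : ℕ) : ∀ e ∈ G d, 1 ≤ e.natAbs ∧ e.natAbs ≤ d := by
  induction d with
  | zero => simp [G]
  | succ d ih =>
    intro e h
    simp only [G, List.mem_append] at h
    rcases h with (h | h) | h
    · have := ih e h; omega
    · simp only [List.mem_singleton] at h
      subst h
      have : ((d : ℤ) + 1).natAbs = d + 1 := by omega
      omega
    · rw [mem_grayRev] at h
      have := ih _ h
      simp only [Int.natAbs_neg] at this
      omega

lemma G_mem {d : ℕ} {e : ℤ} (h : e ∈ G d) : 1 ≤ e.natAbs ∧ e.natAbs ≤ d :=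
  G_mem' d e h

lemma grayRev_G (d : ℕ) :
    grayRev (G (d + 1)) = G d ++ [-((d : ℤ) + 1)] ++ grayRev (G d) := by
  show grayRev (G d ++ [((d : ℤ) + 1)] ++ grayRev (G d)) = _
  rw [grayRev_append, grayRev_append, grayRev_grayRev, grayRev_singleton]
  simp

lemma G_take {n d : ℕ} (h : n ≤ d) : (G d).take (2 ^ n - 1) = G n := by
  induction d with
  | zero => interval_cases n; simp [G]
  | succ d ih =>
    rcases Nat.lt_or_ge n (d + 1) with hn | hn
    · have hn' : n ≤ d := by omega
      have hlen : 2 ^ n - 1 ≤ (G d).length := by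
        rw [G_length]
        have := Nat.pow_le_pow_right (by norm_num : 1 ≤ 2) hn'
        omega
      show (G d ++ [((d : ℤ) + 1)] ++ grayRev (G d)).take (2 ^ n - 1) = G n
      rw [List.append_assoc, List.take_append_of_le_length hlen, ih hn']
    · have : n = d + 1 := by omega
      subst this
      rw [List.take_of_length_le]
      rw [G_length]

lemma G_drop {n d : ℕ} (h : n < d) : (G d).drop (2 ^ d - 2 ^ n) = grayRev (G n) := by
  induction d with
  | zero => omega
  | succ d ih =>
    have h1 : 1 ≤ 2 ^ n := Nat.one_le_two_pow
    have h2 : 2 ^ n ≤ 2 ^ d := Nat.pow_le_pow_right (by norm_num) (by omega)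
    have hd1 : 1 ≤ 2 ^ d := Nat.one_le_two_pow
    show (G d ++ [((d : ℤ) + 1)] ++ grayRev (G d)).drop (2 ^ (d + 1) - 2 ^ n) = _
    have hsplit : 2 ^ (d + 1) - 2 ^ n = (G d ++ [((d : ℤ) + 1)]).length + (2 ^ d - 2 ^ n) := by
      simp [G_length]
      ring_nf
      omega
    rw [List.append_assoc]
    rcases Nat.lt_or_ge n d with hn | hn
    · rw [← List.append_assoc, hsplit, List.drop_length_add_append]
      show (((G d).map (fun x => -x)).reverse).drop (2 ^ d - 2 ^ n) = grayRev (G n)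
      rw [List.drop_reverse]
      have hlen : ((G d).map (fun x => -x)).length = 2 ^ d - 1 := by simp [G_length]
      rw [hlen]
      have he : 2 ^ d - 1 - (2 ^ d - 2 ^ n) = 2 ^ n - 1 := by omega
      rw [he, ← List.map_take, G_take (le_of_lt hn)]
      rfl
    · have hnd : n = d := by omega
      subst hnd
      have he : 2 ^ (n + 1) - 2 ^ n = 2 ^ n := by
        have : (2:ℕ) ^ (n + 1) = 2 ^ n + 2 ^ n := by ring
        omega
      rw [he]
      have hlen : (G n ++ [((n : ℤ) + 1)]).length = 2 ^ n := by
        simp [G_length]; omega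
      rw [← List.append_assoc, ← hlen, List.drop_left]


/-- Set of axes occurring in a list of directions. -/
def absSet (l : List ℤ) : Finset ℕ := l.toFinset.image Int.natAbs

lemma mem_absSet {l : List ℤ} {m : ℕ} : m ∈ absSet l ↔ ∃ g ∈ l, g.natAbs = m := by
  simp [absSet]

lemma absSet_append (l₁ l₂ : List ℤ) : absSet (l₁ ++ l₂) = absSet l₁ ∪ absSet l₂ := by
  simp [absSet, List.toFinset_append, Finset.image_union]

lemma absSet_grayRev (l : List ℤ) : absSet (grayRev l) = absSet l := by
  ext m
  simp only [mem_absSet, mem_grayRev]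
  constructor
  · rintro ⟨g, hg, rfl⟩; exact ⟨-g, hg, Int.natAbs_neg g⟩
  · rintro ⟨g, hg, rfl⟩; exact ⟨-g, by simpa using hg, (Int.natAbs_neg g).symm ▸ rfl⟩

lemma absSet_cons (x : ℤ) (l : List ℤ) : absSet (x :: l) = insert x.natAbs (absSet l) := by
  simp [absSet]

lemma absSet_G (d : ℕ) : absSet (G d) = Finset.Icc 1 d := by
  induction d with
  | zero => ext m; simp [G, absSet]
  | succ d ih =>
    show absSet (G d ++ [((d : ℤ) + 1)] ++ grayRev (G d)) = _
    rw [absSet_append, absSet_append, absSet_grayRev, ih]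
    ext m
    have : ((d : ℤ) + 1).natAbs = d + 1 := by omega
    simp [absSet, this]
    omega

lemma absSet_take_full {n d : ℕ} (h : n ≤ d) :
    absSet ((G d).take (2 ^ n - 1)) = Finset.Icc 1 n := by
  rw [G_take h, absSet_G]

lemma absSet_drop_full {n d : ℕ} (h : n < d) :
    absSet ((G d).drop (2 ^ d - 2 ^ n)) = Finset.Icc 1 n := by
  rw [G_drop h, absSet_grayRev, absSet_G]

lemma G_take_half {n d : ℕ} (h1 : 1 ≤ n) (h : n ≤ d) :
    (G d).take (2 ^ (n - 1)) = G (n - 1) ++ [(n : ℤ)] := by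
  obtain ⟨n, rfl⟩ : ∃ m, n = m + 1 := ⟨n - 1, by omega⟩
  simp only [Nat.add_sub_cancel]
  have ht : (G d).take (2 ^ (n + 1) - 1) = G (n + 1) := G_take h
  have h2 : 2 ^ n ≤ 2 ^ (n + 1) - 1 := by
    have : (2:ℕ) ^ (n + 1) = 2 ^ n + 2 ^ n := by ring
    have := Nat.one_le_two_pow (n := n)
    omega
  have : (G d).take (2 ^ n) = (G (n + 1)).take (2 ^ n) := by
    rw [← ht, List.take_take, Nat.min_eq_left h2]
  rw [this]
  show (G n ++ [((n : ℤ) + 1)] ++ grayRev (G n)).take (2 ^ n) = _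
  have hlen : (G n ++ [((n : ℤ) + 1)]).length = 2 ^ n := by
    have := Nat.one_le_two_pow (n := n)
    simp [G_length]; omega
  rw [List.append_assoc, ← List.append_assoc]
  rw [← hlen, List.take_left]
  simp

lemma G_drop_half {n d : ℕ} (h1 : 1 ≤ n) (h : n < d) :
    (G d).drop (2 ^ d - 1 - 2 ^ (n - 1)) = (-(n : ℤ)) :: grayRev (G (n - 1)) := by
  obtain ⟨n, rfl⟩ : ∃ m, n = m + 1 := ⟨n - 1, by omega⟩
  simp only [Nat.add_sub_cancel]
  have hd : (G d).drop (2 ^ d - 2 ^ (n + 1)) = grayRev (G (n + 1)) := G_drop h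
  have hpn : (2:ℕ) ^ (n + 1) = 2 ^ n + 2 ^ n := by ring
  have h1n : 1 ≤ (2:ℕ) ^ n := Nat.one_le_two_pow
  have h2d : 2 ^ (n + 1) ≤ 2 ^ d := Nat.pow_le_pow_right (by norm_num) (by omega)
  have key : (G d).drop (2 ^ d - 1 - 2 ^ n) =
      ((G d).drop (2 ^ d - 2 ^ (n + 1))).drop (2 ^ n - 1) := by
    rw [List.drop_drop]
    congr 1
    omega
  rw [key, hd, grayRev_G]
  rw [List.append_assoc, ← G_length n, List.drop_left]
  simp

lemma absSet_take_half {n d : ℕ} (h1 : 1 ≤ n) (h : n ≤ d) :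
    absSet ((G d).take (2 ^ (n - 1))) = Finset.Icc 1 n := by
  rw [G_take_half h1 h, absSet_append, absSet_G]
  ext m
  have : (n : ℤ).natAbs = n := by omega
  simp [absSet, this]
  omega

lemma absSet_drop_half {n d : ℕ} (h1 : 1 ≤ n) (h : n < d) :
    absSet ((G d).drop (2 ^ d - 1 - 2 ^ (n - 1))) = Finset.Icc 1 n := by
  rw [G_drop_half h1 h, absSet_cons, absSet_grayRev, absSet_G]
  ext m
  have : (-(n : ℤ)).natAbs = n := by omega
  simp [this]
  omega


lemma count_grayRev (l : List ℤ) (m : ℤ) : (grayRev l).count m = l.count (-m) := by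
  rw [grayRev, List.count_reverse]
  have h := List.count_map_of_injective l (fun x : ℤ => -x) neg_injective
  simpa using h (-m)

lemma count_G_zero {d : ℕ} {m : ℤ} (h : d < m.natAbs) : (G d).count m = 0 :=
  List.count_eq_zero.2 (fun hmem => by have := G_mem hmem; omega)

lemma count_G (d : ℕ) (m : ℤ) (hm : 1 ≤ m) :
    (G d).count m = (G d).count (-m) + (if m = (d : ℤ) then 1 else 0) := by
  induction d with
  | zero =>
    simp [G]
    omega
  | succ d ih =>
    show (G d ++ [((d : ℤ) + 1)] ++ grayRev (G d)).count m =
      (G d ++ [((d : ℤ) + 1)] ++ grayRev (G d)).count (-m) + _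
    rw [List.count_append, List.count_append, List.count_append, List.count_append,
        count_grayRev, count_grayRev, neg_neg]
    simp only [List.count_cons, List.count_nil, beq_iff_eq]
    have hc : ¬ ((d : ℤ) + 1 = -m) := by omega
    rw [if_neg hc]
    by_cases hm1 : (d : ℤ) + 1 = m
    · rw [if_pos hm1, if_pos (by push_cast; omega), ih,
        if_neg (show ¬ m = (d:ℤ) by omega)]
      omega
    · rw [if_neg hm1, if_neg (by push_cast; omega), ih]
      by_cases hm2 : m = (d : ℤ)
      · rw [if_pos hm2]; omega
      · rw [if_neg hm2]; omega

lemma count_take_G (d : ℕ) (m : ℤ) (hm : 1 ≤ m) : ∀ t : ℕ,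
    ((G d).take t).count (-m) ≤ ((G d).take t).count m ∧
    ((G d).take t).count m ≤ ((G d).take t).count (-m) + 1 := by
  induction d with
  | zero => intro t; simp [G]
  | succ d ih =>
    intro t
    have hlen : (G d).length = 2 ^ d - 1 := G_length d
    have h1 : 1 ≤ (2:ℕ) ^ d := Nat.one_le_two_pow
    rcases le_or_gt t (2 ^ d - 1) with ht | ht
    · have heq : (G (d+1)).take t = (G d).take t := by
        show (G d ++ [((d:ℤ)+1)] ++ grayRev (G d)).take t = _
        rw [List.append_assoc, List.take_append_of_le_length (by omega)]
      rw [heq]; exact ih t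
    · have heq : (G (d+1)).take t =
          G d ++ [((d:ℤ)+1)] ++ grayRev ((G d).drop (2 ^ d - 1 - (t - 2 ^ d))) := by
        show (G d ++ [((d:ℤ)+1)] ++ grayRev (G d)).take t = _
        have hL : (G d ++ [((d:ℤ)+1)]).length = 2 ^ d := by simp [hlen]; omega
        have ht2 : t = (G d ++ [((d:ℤ)+1)]).length + (t - 2 ^ d) := by rw [hL]; omega
        conv_lhs => rw [ht2]
        rw [List.take_length_add_append]
        congr 1
        show (((G d).map (fun x => -x)).reverse).take (t - 2 ^ d) = _
        rw [List.take_reverse, List.length_map, hlen, ← List.map_drop]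
        rfl
      rw [heq]
      rw [List.count_append, List.count_append, List.count_append, List.count_append,
          count_grayRev, count_grayRev, neg_neg]
      simp only [List.count_cons, List.count_nil, beq_iff_eq]
      have hc : ¬ ((d : ℤ) + 1 = -m) := by omega
      rw [if_neg hc]
      have hsm : (G d).count m =
          ((G d).take (2 ^ d - 1 - (t - 2 ^ d))).count m
            + ((G d).drop (2 ^ d - 1 - (t - 2 ^ d))).count m := by
        conv_lhs => rw [← List.take_append_drop (2 ^ d - 1 - (t - 2 ^ d)) (G d)]
        rw [List.count_append]
      have hsn : (G d).count (-m) =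
          ((G d).take (2 ^ d - 1 - (t - 2 ^ d))).count (-m)
            + ((G d).drop (2 ^ d - 1 - (t - 2 ^ d))).count (-m) := by
        conv_lhs => rw [← List.take_append_drop (2 ^ d - 1 - (t - 2 ^ d)) (G d)]
        rw [List.count_append]
      have hih := ih (2 ^ d - 1 - (t - 2 ^ d))
      by_cases hm1 : (d : ℤ) + 1 = m
      · have hz1 : (G d).count m = 0 := count_G_zero (by omega)
        have hz2 : (G d).count (-m) = 0 := count_G_zero (by simp [Int.natAbs_neg]; omega)
        rw [if_pos hm1]
        omega
      · rw [if_neg hm1]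
        have hfull := count_G d m hm
        by_cases hm2 : m = (d : ℤ)
        · rw [if_pos hm2] at hfull; omega
        · rw [if_neg hm2] at hfull; omega


lemma isDir_coe {d b : ℕ} (hb1 : 1 ≤ b) (hbd : b ≤ d) : IsDir d (b : ℤ) := by
  constructor
  · exact_mod_cast Nat.one_le_iff_ne_zero.mp hb1
  · simpa using hbd

lemma sp_f_abs_inj (d : ℕ) (σ : SignedPerm d) {b b' : ℕ}
    (hb : 1 ≤ b) (hbd : b ≤ d) (hb' : 1 ≤ b') (hb'd : b' ≤ d)
    (h : (σ.f (b : ℤ)).natAbs = (σ.f (b' : ℤ)).natAbs) : b = b' := by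
  have hdb : IsDir d (b : ℤ) := isDir_coe hb hbd
  have hdb' : IsDir d (b' : ℤ) := isDir_coe hb' hb'd
  rcases Int.natAbs_eq_natAbs_iff.mp h with h1 | h1
  · have := congrArg σ.inv h1
    rw [σ.left_inv _ hdb, σ.left_inv _ hdb'] at this
    exact_mod_cast this
  · rw [← σ.neg] at h1
    have := congrArg σ.inv h1
    have hdnb' : IsDir d (-(b' : ℤ)) := ⟨by omega, by simpa using hdb'.2⟩
    rw [σ.left_inv _ hdb, σ.left_inv _ hdnb'] at this
    omega

/-- The set of axes `{|σ(1)|, …, |σ(n)|}`. -/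
def SσS (d n : ℕ) (σ : SignedPerm d) : Finset ℕ :=
  (Finset.Icc 1 n).image (fun b : ℕ => (σ.f (b : ℤ)).natAbs)

lemma SσS_mono (d : ℕ) (σ : SignedPerm d) {n n' : ℕ} (h : n ≤ n') :
    SσS d n σ ⊆ SσS d n' σ :=
  Finset.image_subset_image (Finset.Icc_subset_Icc_right h)

lemma card_SσS (d : ℕ) (σ : SignedPerm d) {n : ℕ} (h : n ≤ d) :
    (SσS d n σ).card = n := by
  rw [SσS, Finset.card_image_of_injOn, Nat.card_Icc]
  · omega
  · intro b hb b' hb' hbb'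
    simp only [Finset.mem_coe, Finset.mem_Icc] at hb hb'
    exact sp_f_abs_inj d σ hb.1 (le_trans hb.2 h) hb'.1 (le_trans hb'.2 h) hbb'

lemma mem_SσS (d : ℕ) (σ : SignedPerm d) {n α : ℕ}
    (hα1 : 1 ≤ α) (hαd : α ≤ d) (hn : n ≤ d) :
    α ∈ SσS d n σ ↔ ((σ.inv (α : ℤ)).natAbs ≤ n ∧ 1 ≤ (σ.inv (α : ℤ)).natAbs) := by
  have hdα : IsDir d (α : ℤ) := isDir_coe hα1 hαd
  have hdu : IsDir d (σ.inv (α : ℤ)) := σ.maps_inv _ hdα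
  constructor
  · intro h
    simp only [SσS, Finset.mem_image, Finset.mem_Icc] at h
    obtain ⟨b, ⟨hb1, hbn⟩, hb⟩ := h
    have hdb : IsDir d (b : ℤ) := isDir_coe hb1 (le_trans hbn hn)
    have hb' : (σ.f (b:ℤ)).natAbs = ((α : ℤ)).natAbs := by rw [hb, Int.natAbs_cast]
    rcases Int.natAbs_eq_natAbs_iff.mp hb' with h1 | h1
    · have h2 := congrArg σ.inv h1
      rw [σ.left_inv _ hdb] at h2
      rw [← h2, Int.natAbs_cast]
      omega
    · have h1' : σ.f (-(b:ℤ)) = (α : ℤ) := by rw [σ.neg, h1]; ring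
      have h2 := congrArg σ.inv h1'
      have hdnb : IsDir d (-(b : ℤ)) := ⟨by omega, by simpa using hdb.2⟩
      rw [σ.left_inv _ hdnb] at h2
      rw [← h2, Int.natAbs_neg, Int.natAbs_cast]
      omega
  · rintro ⟨h1, h2⟩
    simp only [SσS, Finset.mem_image, Finset.mem_Icc]
    refine ⟨(σ.inv (α : ℤ)).natAbs, ⟨h2, h1⟩, ?_⟩
    rcases Int.natAbs_eq (σ.inv (α : ℤ)) with he | he
    · rw [show (((σ.inv (α : ℤ)).natAbs : ℤ)) = σ.inv (α : ℤ) by omega,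
        σ.right_inv _ hdα, Int.natAbs_cast]
    · rw [show (((σ.inv (α : ℤ)).natAbs : ℤ)) = -(σ.inv (α : ℤ)) by omega,
        σ.neg, σ.right_inv _ hdα, Int.natAbs_neg, Int.natAbs_cast]

lemma scanl_getD {α β : Type*} (f : β → α → β) (d0 : β) :
    ∀ (l : List α) (b : β) (t : ℕ), t ≤ l.length →
      (l.scanl f b).getD t d0 = (l.take t).foldl f b := by
  intro l
  induction l with
  | nil =>
    intro b t ht
    simp only [List.length_nil, Nat.le_zero] at ht
    subst ht
    simp [List.scanl]
  | cons a l ih =>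
    intro b t ht
    rw [List.scanl_cons]
    cases t with
    | zero => simp
    | succ t =>
      simp only [List.getD_cons_succ, List.take_succ_cons, List.foldl_cons]
      exact ih (f b a) t (by simpa using ht)

lemma neg_sum_map {α : Type*} (l : List α) (f : α → ℤ) :
    (l.map (fun x => -(f x))).sum = -((l.map f).sum) := by
  induction l with
  | nil => simp
  | cons a l ih => simp [ih]; ring

lemma foldl_move_coord (l : List ℤ) (v : Pt) (c : ℕ) :
    (l.foldl move v) c = v c + (l.map (fun e => if e.natAbs = c then e.sign else 0)).sum := by
  induction l generalizing v with
  | nil => simp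
  | cons e l ih =>
    simp only [List.foldl_cons, List.map_cons, List.sum_cons, ih]
    have h : (move v e) c = v c + (if e.natAbs = c then e.sign else 0) := by
      by_cases hc : c = e.natAbs
      · rw [if_pos hc.symm]; simp [move, hc]
      · rw [if_neg (fun h => hc h.symm)]; simp [move, hc]
    rw [h]
    ring

lemma sum_if_count (m : ℤ) (hm : 1 ≤ m) : ∀ (l : List ℤ),
    (l.map (fun e => if e.natAbs = m.natAbs then e.sign else 0)).sum
      = (l.count m : ℤ) - (l.count (-m) : ℤ) := by
  intro l
  induction l with
  | nil => simp
  | cons e l ih =>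
    simp only [List.map_cons, List.sum_cons, List.count_cons, ih, beq_iff_eq]
    by_cases he1 : e = m
    · subst he1
      rw [if_pos rfl, if_pos rfl, if_neg (by omega), Int.sign_eq_one_iff_pos.mpr (by omega)]
      push_cast
      ring
    · by_cases he2 : e = -m
      · subst he2
        rw [if_pos (Int.natAbs_neg m), if_neg (by omega), if_pos rfl,
          Int.sign_eq_neg_one_iff_neg.mpr (by omega)]
        push_cast
        ring
      · have hne : ¬ (e.natAbs = m.natAbs) := by
          intro h
          rcases Int.natAbs_eq_natAbs_iff.mp h with h1 | h1 <;> omega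
        rw [if_neg hne, if_neg he1, if_neg he2]
        push_cast
        ring

lemma grayPiece_length (d : ℕ) (σ : SignedPerm d) (v : Pt) :
    (grayPiece d σ v).length = 2 ^ d := by
  have h1 : 1 ≤ (2:ℕ) ^ d := Nat.one_le_two_pow
  show (((G d).map σ.f).scanl move _).length = 2 ^ d
  rw [List.length_scanl, List.length_map, G_length]
  omega

lemma grayPiece_getD (d : ℕ) (σ : SignedPerm d) (v : Pt) (t : ℕ) (ht : t ≤ 2 ^ d - 1) :
    (grayPiece d σ v).getD t ptZero =
      (((G d).take t).map σ.f).foldl move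
        (fun j => 2 * v j + if 1 ≤ j ∧ j ≤ d then flipped (σ.inv (j : ℤ)) else 0) := by
  show (((G d).map σ.f).scanl move _).getD t ptZero = _
  rw [scanl_getD move ptZero _ _ t (by rw [List.length_map, G_length]; exact ht),
    List.map_take]

lemma grayPiece_step (d : ℕ) (σ : SignedPerm d) (v : Pt) (t : ℕ) (ht : t < 2 ^ d - 1) :
    (grayPiece d σ v).getD (t + 1) ptZero =
      move ((grayPiece d σ v).getD t ptZero) (σ.f ((G d).getD t 0)) := by
  rw [grayPiece_getD d σ v t (le_of_lt ht), grayPiece_getD d σ v (t+1) (by omega)]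
  have hlt : t < (G d).length := by rw [G_length]; exact ht
  have htake : (G d).take (t + 1) = (G d).take t ++ [(G d).getD t 0] := by
    rw [List.take_succ, List.getElem?_eq_getElem hlt, List.getD_eq_getElem (G d) 0 hlt]
    rfl
  rw [htake, List.map_append, List.foldl_append]
  simp

lemma flatten_getD {α : Type*} (P : ℕ) : ∀ (L : List (List α)), (∀ x ∈ L, x.length = P) →
    ∀ i t (d0 : α), i < L.length → t < P →
    L.flatten.getD (i * P + t) d0 = (L.getD i []).getD t d0 := by
  intro L
  induction L with
  | nil => intro _ i t d0 hi; simp at hi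
  | cons x L ih =>
    intro hall i t d0 hi ht
    have hx : x.length = P := hall x (by simp)
    cases i with
    | zero =>
      simp only [Nat.zero_mul, Nat.zero_add, List.flatten_cons, List.getD_cons_zero]
      rw [List.getD_append _ _ _ _ (by omega)]
    | succ i =>
      have hidx : (i + 1) * P + t = x.length + (i * P + t) := by rw [hx]; ring
      rw [List.flatten_cons, hidx, List.getD_cons_succ]
      rw [List.getD_append_right _ _ _ _ (by omega)]
      have hred : x.length + (i * P + t) - x.length = i * P + t := by omega
      rw [hred]
      exact ih (fun y hy => hall y (by simp [hy])) i t d0 (by simpa using hi) ht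

lemma flatten_length {α : Type*} (P : ℕ) : ∀ (L : List (List α)), (∀ x ∈ L, x.length = P) →
    L.flatten.length = L.length * P := by
  intro L
  induction L with
  | nil => simp
  | cons x L ih =>
    intro hall
    rw [List.flatten_cons, List.length_append, ih (fun y hy => hall y (by simp [hy])),
      hall x (by simp), List.length_cons]
    ring


lemma sp_f_natAbs (d : ℕ) (σ : SignedPerm d) (g : ℤ) :
    (σ.f ((g.natAbs : ℤ))).natAbs = (σ.f g).natAbs := by
  rcases Int.natAbs_eq g with he | he
  · rw [← he]
  · rw [show ((g.natAbs : ℤ)) = -g by omega, σ.neg, Int.natAbs_neg]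

lemma sp_axis_iff (d : ℕ) (σ : SignedPerm d) {g : ℤ} (hg : IsDir d g) {c : ℕ}
    (hc1 : 1 ≤ c) (hcd : c ≤ d) :
    ((σ.f g).natAbs = c) ↔ (g = σ.inv (c : ℤ) ∨ g = -σ.inv (c : ℤ)) := by
  have hdc : IsDir d (c : ℤ) := isDir_coe hc1 hcd
  constructor
  · intro h
    have h' : (σ.f g).natAbs = ((c : ℤ)).natAbs := by rw [Int.natAbs_cast]; exact h
    rcases Int.natAbs_eq_natAbs_iff.mp h' with h1 | h1
    · left
      have h2 := congrArg σ.inv h1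
      rwa [σ.left_inv _ hg] at h2
    · right
      have h2 := congrArg σ.inv h1
      rw [σ.left_inv _ hg, σ.neg_inv] at h2
      exact h2
  · rintro (rfl | rfl)
    · rw [σ.right_inv _ hdc, Int.natAbs_cast]
    · rw [σ.neg, σ.right_inv _ hdc, Int.natAbs_neg, Int.natAbs_cast]

lemma grayPiece_coord (d : ℕ) (σ : SignedPerm d) (v : Pt) (t : ℕ) (ht : t ≤ 2 ^ d - 1)
    (c : ℕ) (hc1 : 1 ≤ c) (hcd : c ≤ d) :
    (grayPiece d σ v).getD t ptZero c = 2 * v c ∨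
    (grayPiece d σ v).getD t ptZero c = 2 * v c + 1 := by
  rw [grayPiece_getD d σ v t ht, foldl_move_coord, List.map_map]
  have hdc : IsDir d (c : ℤ) := isDir_coe hc1 hcd
  have hdu : IsDir d (σ.inv (c : ℤ)) := σ.maps_inv _ hdc
  have hune : σ.inv (c : ℤ) ≠ 0 := hdu.1
  have hmz1 : (1 : ℤ) ≤ (((σ.inv (c : ℤ)).natAbs : ℕ) : ℤ) := by omega
  have hcnt := count_take_G d (((σ.inv (c : ℤ)).natAbs : ℕ) : ℤ) hmz1 t
  rw [if_pos (And.intro hc1 hcd)]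
  rcases lt_or_gt_of_ne hune with hneg | hpos
  · -- σ.inv c < 0
    have hfm : σ.f ((((σ.inv (c : ℤ)).natAbs : ℕ) : ℤ)) = -(c : ℤ) := by
      rw [show ((((σ.inv (c : ℤ)).natAbs : ℕ) : ℤ)) = -(σ.inv (c : ℤ)) by omega,
        σ.neg, σ.right_inv _ hdc]
    have claim : ∀ g ∈ (G d).take t,
        ((fun e : ℤ => if e.natAbs = c then e.sign else 0) ∘ σ.f) g =
          -(if g.natAbs = ((((σ.inv (c : ℤ)).natAbs : ℕ) : ℤ)).natAbs then g.sign else 0) := by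
      intro g hgm
      have hgG : g ∈ G d := List.take_subset t (G d) hgm
      have hgb := G_mem hgG
      have hg : IsDir d g := ⟨by omega, hgb.2⟩
      simp only [Function.comp]
      by_cases hax : (σ.f g).natAbs = c
      · rw [if_pos hax]
        rcases (sp_axis_iff d σ hg hc1 hcd).mp hax with h1 | h1
        · rw [if_pos (by rw [h1]; omega)]
          rw [h1, σ.right_inv _ hdc]
          rw [Int.sign_eq_one_iff_pos.mpr (by omega : (0:ℤ) < (c:ℤ)),
            Int.sign_eq_neg_one_iff_neg.mpr hneg]
          try norm_num
        · rw [if_pos (by rw [h1]; omega)]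
          rw [h1, σ.neg, σ.right_inv _ hdc]
          rw [Int.sign_eq_neg_one_iff_neg.mpr (by omega : -(c:ℤ) < 0),
            Int.sign_eq_one_iff_pos.mpr (by omega : (0:ℤ) < -(σ.inv (c : ℤ)))]
          try norm_num
      · rw [if_neg hax, if_neg ?_]
        · ring
        · intro h
          apply hax
          apply (sp_axis_iff d σ hg hc1 hcd).mpr
          have h' : g.natAbs = (σ.inv (c : ℤ)).natAbs := by omega
          rcases Int.natAbs_eq_natAbs_iff.mp h' with h1 | h1
          · left; exact h1
          · right; exact h1
    rw [List.map_congr_left claim, neg_sum_map, sum_if_count _ hmz1]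
    rw [flipped, if_pos hneg]
    omega
  · -- σ.inv c > 0
    have hfm : σ.f ((((σ.inv (c : ℤ)).natAbs : ℕ) : ℤ)) = (c : ℤ) := by
      rw [show ((((σ.inv (c : ℤ)).natAbs : ℕ) : ℤ)) = σ.inv (c : ℤ) by omega,
        σ.right_inv _ hdc]
    have claim : ∀ g ∈ (G d).take t,
        ((fun e : ℤ => if e.natAbs = c then e.sign else 0) ∘ σ.f) g =
          (if g.natAbs = ((((σ.inv (c : ℤ)).natAbs : ℕ) : ℤ)).natAbs then g.sign else 0) := by
      intro g hgm
      have hgG : g ∈ G d := List.take_subset t (G d) hgm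
      have hgb := G_mem hgG
      have hg : IsDir d g := ⟨by omega, hgb.2⟩
      simp only [Function.comp]
      by_cases hax : (σ.f g).natAbs = c
      · rw [if_pos hax]
        rcases (sp_axis_iff d σ hg hc1 hcd).mp hax with h1 | h1
        · rw [if_pos (by rw [h1]; omega)]
          rw [h1, σ.right_inv _ hdc]
          rw [Int.sign_eq_one_iff_pos.mpr (by omega : (0:ℤ) < (c:ℤ)),
            Int.sign_eq_one_iff_pos.mpr hpos]
          try norm_num
        · rw [if_pos (by rw [h1]; omega)]
          rw [h1, σ.neg, σ.right_inv _ hdc]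
          rw [Int.sign_eq_neg_one_iff_neg.mpr (by omega : -(c:ℤ) < 0),
            Int.sign_eq_neg_one_iff_neg.mpr (by omega : -(σ.inv (c : ℤ)) < 0)]
          try norm_num
      · rw [if_neg hax, if_neg ?_]
        intro h
        apply hax
        apply (sp_axis_iff d σ hg hc1 hcd).mpr
        have h' : g.natAbs = (σ.inv (c : ℤ)).natAbs := by omega
        rcases Int.natAbs_eq_natAbs_iff.mp h' with h1 | h1
        · left; exact h1
        · right; exact h1
    rw [List.map_congr_left claim, sum_if_count _ hmz1]
    rw [flipped, if_neg (by omega : ¬ (σ.inv (c : ℤ) < 0))]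
    omega

lemma axesOfEdge_move (d : ℕ) (v : Pt) (e : ℤ) (he : IsDir d e) :
    axesOfEdge d v (move v e) = {e.natAbs} := by
  have hsgn : e.sign ≠ 0 := fun h => he.1 (Int.sign_eq_zero_iff_zero.mp h)
  ext j
  simp only [axesOfEdge, Finset.mem_filter, Finset.mem_range, Finset.mem_singleton]
  constructor
  · rintro ⟨hj, hne⟩
    by_contra hji
    apply hne
    show v j = move v e j
    rw [move, if_neg hji]
  · rintro rfl
    refine ⟨by have := he.2; omega, ?_⟩
    show v e.natAbs ≠ move v e e.natAbs
    rw [move, if_pos rfl]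
    omega

lemma chain'_getD {R : Pt → Pt → Prop} {l : List Pt} (h : l.Chain' R) {i : ℕ}
    (hi : i + 1 < l.length) : R (l.getD i ptZero) (l.getD (i + 1) ptZero) := by
  rw [List.getD_eq_getElem _ _ (by omega : i < l.length), List.getD_eq_getElem _ _ hi]
  exact List.isChain_iff_getElem.mp h i (by omega)


lemma image_absSet_iff (d : ℕ) (τ : SignedPerm d) (l : List ℤ) (β : ℕ) :
    β ∈ (absSet l).image (fun b : ℕ => (τ.f (b : ℤ)).natAbs) ↔
      ∃ t, t < l.length ∧ β = (τ.f (l.getD t 0)).natAbs := by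
  simp only [Finset.mem_image, mem_absSet]
  constructor
  · rintro ⟨b, ⟨g, hgl, rfl⟩, rfl⟩
    obtain ⟨t, htl, hg⟩ := List.mem_iff_getElem.mp hgl
    refine ⟨t, htl, ?_⟩
    rw [List.getD_eq_getElem _ _ htl, hg, sp_f_natAbs]
  · rintro ⟨t, htl, rfl⟩
    refine ⟨(l.getD t 0).natAbs, ⟨l.getD t 0, ?_, rfl⟩, sp_f_natAbs d τ _⟩
    rw [List.getD_eq_getElem _ _ htl]
    exact List.getElem_mem _

lemma SσS_eq (d n : ℕ) (τ : SignedPerm d) :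
    (Finset.Icc 1 n).image (fun b : ℕ => (τ.f (b : ℤ)).natAbs) = SσS d n τ := rfl

lemma boundary_facts (d K : ℕ) (hd : 2 ≤ d)
    (v : ℕ → Pt) (σ : ℕ → SignedPerm d) (B : List Pt)
    (hB : B = ((List.range K).map (fun i => grayPiece d (σ i) (v i))).flatten)
    (hchain : B.Chain' (IsEdge d))
    (hBho : Hyperorthogonal d B)
    (j : ℕ) (hj : j + 1 < K) :
    ∃ α : ℕ,
      axesOfEdge d (B.getD ((j+1) * 2 ^ d - 1) ptZero) (B.getD ((j+1) * 2 ^ d) ptZero) = {α} ∧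
      (∀ n, 1 ≤ n → n ≤ d - 2 → α ∉ SσS d n (σ j) ∧ α ∉ SσS d n (σ (j+1))) ∧
      (∀ n, 2 ≤ n → n ≤ d - 2 →
        SσS d (n-1) (σ (j+1)) ⊆ SσS d n (σ j) ∧ SσS d (n-1) (σ j) ⊆ SσS d n (σ (j+1))) := by
  have hP1 : 1 ≤ 2 ^ d := Nat.one_le_two_pow
  have hGlen : (G d).length = 2 ^ d - 1 := G_length d
  have hall : ∀ x ∈ (List.range K).map (fun i => grayPiece d (σ i) (v i)), x.length = 2 ^ d := by
    intro x hx
    simp only [List.mem_map] at hx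
    obtain ⟨i, _, rfl⟩ := hx
    exact grayPiece_length d (σ i) (v i)
  have hBlen : B.length = K * 2 ^ d := by
    rw [hB, flatten_length _ _ hall, List.length_map, List.length_range]
  have hBget : ∀ i, i < K → ∀ t, t < 2 ^ d →
      B.getD (i * 2 ^ d + t) ptZero = (grayPiece d (σ i) (v i)).getD t ptZero := by
    intro i hi t htP
    rw [hB, flatten_getD _ _ hall i t ptZero (by simpa using hi) htP]
    congr 1
    rw [List.getD_eq_getElem _ _ (by simpa using hi), List.getElem_map, List.getElem_range]
  have hGdir : ∀ p, p < 2 ^ d - 1 → IsDir d ((G d).getD p 0) := by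
    intro p hp
    have hmem : (G d).getD p 0 ∈ G d := by
      rw [List.getD_eq_getElem _ _ (by omega)]
      exact List.getElem_mem _
    have := G_mem hmem
    exact ⟨by omega, this.2⟩
  -- the boundary edge
  have hedge : IsEdge d (B.getD ((j+1) * 2 ^ d - 1) ptZero) (B.getD ((j+1) * 2 ^ d) ptZero) := by
    have h1 : (j+1) * 2 ^ d - 1 + 1 = (j+1) * 2 ^ d := by
      have : 0 < (j+1) * 2 ^ d := Nat.mul_pos (by omega) (by omega)
      omega
    have h2 : (j+1) * 2 ^ d - 1 + 1 < B.length := by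
      rw [h1, hBlen]
      exact Nat.mul_lt_mul_of_pos_right (by omega) (by omega)
    have := chain'_getD hchain h2
    rwa [h1] at this
  obtain ⟨e, he⟩ := hedge
  have hsing : axesOfEdge d (B.getD ((j+1) * 2 ^ d - 1) ptZero)
      (B.getD ((j+1) * 2 ^ d) ptZero) = {e.natAbs} := by
    rw [he.2]
    exact axesOfEdge_move d _ e he.1
  -- the general window computation
  have hwin : ∀ n x y : ℕ, n ≤ d - 2 → x + 1 + y = 2 ^ n →
      ((absSet (((G d).drop (2 ^ d - 1 - x)).take x)).image
          (fun b : ℕ => ((σ j).f (b:ℤ)).natAbs)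
        ∪ {e.natAbs}
        ∪ (absSet ((G d).take y)).image
          (fun b : ℕ => ((σ (j+1)).f (b:ℤ)).natAbs)).card = n + 1 := by
    intro n x y hn hxy
    have hnd : (2:ℕ) ^ n ≤ 2 ^ (d - 2) := Nat.pow_le_pow_right (by norm_num) hn
    have hdd : (2:ℕ) ^ (d - 2) * 4 = 2 ^ d := by
      have h4 : (4:ℕ) = 2 ^ 2 := by norm_num
      rw [h4, ← pow_add]
      congr 1
      omega
    have hxP : x ≤ 2 ^ d - 1 := by omega
    have hyP : y ≤ 2 ^ d - 1 := by omega
    have hslen : j * 2 ^ d + (2 ^ d - 1 - x) + 2 ^ n + 1 ≤ B.length := by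
      rw [hBlen]
      have : (j + 2) * 2 ^ d ≤ K * 2 ^ d := Nat.mul_le_mul_right _ (by omega)
      have h2 : (j + 2) * 2 ^ d = j * 2 ^ d + 2 ^ d + 2 ^ d := by ring
      omega
    have hcard := hBho n hn (j * 2 ^ d + (2 ^ d - 1 - x)) hslen
    -- identify the three kinds of edges in the window
    have hedge1 : ∀ t, t < x →
        axesOfEdge d (B.getD (j * 2 ^ d + (2 ^ d - 1 - x) + t) ptZero)
          (B.getD (j * 2 ^ d + (2 ^ d - 1 - x) + t + 1) ptZero) =
        {((σ j).f ((G d).getD (2 ^ d - 1 - x + t) 0)).natAbs} := by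
      intro t ht
      have hp : 2 ^ d - 1 - x + t < 2 ^ d - 1 := by omega
      have h1 : j * 2 ^ d + (2 ^ d - 1 - x) + t = j * 2 ^ d + (2 ^ d - 1 - x + t) := by omega
      have h2 : j * 2 ^ d + (2 ^ d - 1 - x) + t + 1 = j * 2 ^ d + (2 ^ d - 1 - x + t + 1) := by
        omega
      rw [h2, h1, hBget j (by omega) _ (by omega), hBget j (by omega) _ (by omega)]
      rw [grayPiece_step d (σ j) (v j) _ hp]
      exact axesOfEdge_move d _ _ ((σ j).maps _ (hGdir _ hp))
    have hedge2 :
        axesOfEdge d (B.getD (j * 2 ^ d + (2 ^ d - 1 - x) + x) ptZero)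
          (B.getD (j * 2 ^ d + (2 ^ d - 1 - x) + x + 1) ptZero) = {e.natAbs} := by
      have h1 : j * 2 ^ d + (2 ^ d - 1 - x) + x = (j+1) * 2 ^ d - 1 := by
        have : (j+1) * 2 ^ d = j * 2 ^ d + 2 ^ d := by ring
        omega
      have h2 : j * 2 ^ d + (2 ^ d - 1 - x) + x + 1 = (j+1) * 2 ^ d := by
        have : (j+1) * 2 ^ d = j * 2 ^ d + 2 ^ d := by ring
        omega
      rw [h2, h1, hsing]
    have hedge3 : ∀ t, x < t → t < 2 ^ n →
        axesOfEdge d (B.getD (j * 2 ^ d + (2 ^ d - 1 - x) + t) ptZero)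
          (B.getD (j * 2 ^ d + (2 ^ d - 1 - x) + t + 1) ptZero) =
        {((σ (j+1)).f ((G d).getD (t - x - 1) 0)).natAbs} := by
      intro t htx htn
      have hp : t - x - 1 < 2 ^ d - 1 := by omega
      have h1 : j * 2 ^ d + (2 ^ d - 1 - x) + t = (j+1) * 2 ^ d + (t - x - 1) := by
        have : (j+1) * 2 ^ d = j * 2 ^ d + 2 ^ d := by ring
        omega
      have h2 : j * 2 ^ d + (2 ^ d - 1 - x) + t + 1 = (j+1) * 2 ^ d + (t - x - 1 + 1) := by
        have : (j+1) * 2 ^ d = j * 2 ^ d + 2 ^ d := by ring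
        omega
      rw [h2, h1, hBget (j+1) (by omega) _ (by omega), hBget (j+1) (by omega) _ (by omega)]
      rw [grayPiece_step d (σ (j+1)) (v (j+1)) _ hp]
      exact axesOfEdge_move d _ _ ((σ (j+1)).maps _ (hGdir _ hp))
    -- index correspondence for the two segments
    have hseg1len : (((G d).drop (2 ^ d - 1 - x)).take x).length = x := by
      rw [List.length_take, List.length_drop, hGlen]
      omega
    have hseg1get : ∀ t, t < x →
        ((((G d).drop (2 ^ d - 1 - x)).take x).getD t 0) = (G d).getD (2 ^ d - 1 - x + t) 0 := by
      intro t ht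
      rw [List.getD_eq_getElem _ _ (by rw [hseg1len]; exact ht),
        List.getD_eq_getElem _ _ (by omega : 2 ^ d - 1 - x + t < (G d).length),
        List.getElem_take, List.getElem_drop]
    have htakeylen : ((G d).take y).length = y := by
      rw [List.length_take, hGlen]
      omega
    have htakeyget : ∀ t, t < y → (((G d).take y).getD t 0) = (G d).getD t 0 := by
      intro t ht
      rw [List.getD_eq_getElem _ _ (by rw [htakeylen]; exact ht),
        List.getD_eq_getElem _ _ (by omega : t < (G d).length),
        List.getElem_take]
    have hbi : (Finset.range (2 ^ n)).biUnion
        (fun t => axesOfEdge d (B.getD (j * 2 ^ d + (2 ^ d - 1 - x) + t) ptZero)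
          (B.getD (j * 2 ^ d + (2 ^ d - 1 - x) + t + 1) ptZero)) =
        (absSet (((G d).drop (2 ^ d - 1 - x)).take x)).image
            (fun b : ℕ => ((σ j).f (b:ℤ)).natAbs)
          ∪ {e.natAbs}
          ∪ (absSet ((G d).take y)).image
            (fun b : ℕ => ((σ (j+1)).f (b:ℤ)).natAbs) := by
      ext β
      simp only [Finset.mem_biUnion, Finset.mem_range, Finset.mem_union, Finset.mem_singleton]
      constructor
      · rintro ⟨t, htn, hβ⟩
        rcases Nat.lt_trichotomy t x with htx | rfl | htx
        · left; left
          rw [hedge1 t htx, Finset.mem_singleton] at hβ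
          rw [image_absSet_iff]
          refine ⟨t, by rw [hseg1len]; exact htx, ?_⟩
          rw [hseg1get t htx]
          exact hβ
        · left; right
          rw [hedge2, Finset.mem_singleton] at hβ
          exact hβ
        · right
          rw [hedge3 t htx htn, Finset.mem_singleton] at hβ
          rw [image_absSet_iff]
          refine ⟨t - x - 1, by rw [htakeylen]; omega, ?_⟩
          rw [htakeyget (t - x - 1) (by omega)]
          exact hβ
      · rintro ((h | h) | h)
        · rw [image_absSet_iff] at h
          obtain ⟨t, htl, hβ⟩ := h
          rw [hseg1len] at htl
          refine ⟨t, by omega, ?_⟩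
          rw [hedge1 t htl, Finset.mem_singleton, hβ, hseg1get t htl]
        · refine ⟨x, by omega, ?_⟩
          rw [hedge2, Finset.mem_singleton]
          exact h
        · rw [image_absSet_iff] at h
          obtain ⟨t, htl, hβ⟩ := h
          rw [htakeylen] at htl
          refine ⟨x + 1 + t, by omega, ?_⟩
          rw [hedge3 (x + 1 + t) (by omega) (by omega), Finset.mem_singleton,
            show x + 1 + t - x - 1 = t by omega, hβ, htakeyget t htl]
    rw [hbi] at hcard
    exact hcard
  -- instantiate the four windows
  have hW1 : ∀ n, 1 ≤ n → n ≤ d - 2 → (SσS d n (σ j) ∪ {e.natAbs}).card = n + 1 := by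
    intro n h1 h2
    have h2n : 1 ≤ (2:ℕ) ^ n := Nat.one_le_two_pow
    have hw := hwin n (2 ^ n - 1) 0 h2 (by omega)
    rw [show 2 ^ d - 1 - (2 ^ n - 1) = 2 ^ d - 2 ^ n by
        have : (2:ℕ) ^ n ≤ 2 ^ d := Nat.pow_le_pow_right (by norm_num) (by omega)
        omega] at hw
    rw [G_drop (by omega : n < d)] at hw
    rw [List.take_of_length_le (by rw [grayRev_length, G_length])] at hw
    rw [absSet_grayRev, absSet_G, SσS_eq] at hw
    rw [List.take_zero] at hw
    simpa [absSet] using hw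
  have hW1' : ∀ n, 1 ≤ n → n ≤ d - 2 → ({e.natAbs} ∪ SσS d n (σ (j+1)) : Finset ℕ).card = n + 1 := by
    intro n h1 h2
    have h2n : 1 ≤ (2:ℕ) ^ n := Nat.one_le_two_pow
    have hw := hwin n 0 (2 ^ n - 1) h2 (by omega)
    rw [List.take_zero, G_take (by omega : n ≤ d), absSet_G, SσS_eq] at hw
    simpa [absSet] using hw
  have hα : ∀ n, 1 ≤ n → n ≤ d - 2 →
      e.natAbs ∉ SσS d n (σ j) ∧ e.natAbs ∉ SσS d n (σ (j+1)) := by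
    intro n h1 h2
    constructor
    · intro hmem
      have hc := hW1 n h1 h2
      rw [Finset.union_eq_left.mpr (Finset.singleton_subset_iff.mpr hmem)] at hc
      rw [card_SσS d (σ j) (by omega)] at hc
      omega
    · intro hmem
      have hc := hW1' n h1 h2
      rw [Finset.union_eq_right.mpr (Finset.singleton_subset_iff.mpr hmem)] at hc
      rw [card_SσS d (σ (j+1)) (by omega)] at hc
      omega
  have hW2 : ∀ n, 2 ≤ n → n ≤ d - 2 →
      ((SσS d n (σ j) ∪ {e.natAbs}) ∪ SσS d (n-1) (σ (j+1))).card = n + 1 := by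
    intro n h1 h2
    have h2n : 1 ≤ (2:ℕ) ^ (n-1) := Nat.one_le_two_pow
    have hp : (2:ℕ) ^ (n-1) + 2 ^ (n-1) = 2 ^ n := by
      have h3 : n - 1 + 1 = n := by omega
      calc (2:ℕ) ^ (n-1) + 2 ^ (n-1) = 2 ^ (n-1) * 2 := by ring
      _ = 2 ^ (n-1+1) := by rw [pow_succ]
      _ = 2 ^ n := by rw [h3]
    have hw := hwin n (2 ^ (n-1)) (2 ^ (n-1) - 1) h2 (by omega)
    rw [List.take_of_length_le (by
        rw [List.length_drop, G_length]
        have : (2:ℕ) ^ (n-1) ≤ 2 ^ d := Nat.pow_le_pow_right (by norm_num) (by omega)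
        omega)] at hw
    rw [absSet_drop_half (by omega) (by omega : n < d), SσS_eq] at hw
    rw [G_take (by omega : n - 1 ≤ d), absSet_G, SσS_eq] at hw
    exact hw
  have hW2' : ∀ n, 2 ≤ n → n ≤ d - 2 →
      ((SσS d (n-1) (σ j) ∪ {e.natAbs}) ∪ SσS d n (σ (j+1))).card = n + 1 := by
    intro n h1 h2
    have h2n : 1 ≤ (2:ℕ) ^ (n-1) := Nat.one_le_two_pow
    have hp : (2:ℕ) ^ (n-1) + 2 ^ (n-1) = 2 ^ n := by
      have h3 : n - 1 + 1 = n := by omega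
      calc (2:ℕ) ^ (n-1) + 2 ^ (n-1) = 2 ^ (n-1) * 2 := by ring
      _ = 2 ^ (n-1+1) := by rw [pow_succ]
      _ = 2 ^ n := by rw [h3]
    have hw := hwin n (2 ^ (n-1) - 1) (2 ^ (n-1)) h2 (by omega)
    rw [show 2 ^ d - 1 - (2 ^ (n-1) - 1) = 2 ^ d - 2 ^ (n-1) by
        have : (2:ℕ) ^ (n-1) ≤ 2 ^ d := Nat.pow_le_pow_right (by norm_num) (by omega)
        omega] at hw
    rw [G_drop (by omega : n - 1 < d)] at hw
    rw [List.take_of_length_le (by rw [grayRev_length, G_length])] at hw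
    rw [absSet_grayRev, absSet_G, SσS_eq] at hw
    rw [absSet_take_half (by omega) (by omega : n ≤ d), SσS_eq] at hw
    exact hw
  refine ⟨e.natAbs, hsing, hα, ?_⟩
  intro n h1 h2
  have hαn := hα n (by omega) h2
  have hαn' := hα (n-1) (by omega) (by omega)
  constructor
  · have hXcard : (SσS d n (σ j) ∪ {e.natAbs}).card = n + 1 := hW1 n (by omega) h2
    have heq : SσS d n (σ j) ∪ {e.natAbs} =
        (SσS d n (σ j) ∪ {e.natAbs}) ∪ SσS d (n-1) (σ (j+1)) := by
      apply Finset.eq_of_subset_of_card_le Finset.subset_union_left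
      rw [hW2 n h1 h2, hXcard]
    intro β hβ
    have hβ2 : β ∈ (SσS d n (σ j) ∪ {e.natAbs}) ∪ SσS d (n-1) (σ (j+1)) :=
      Finset.mem_union_right _ hβ
    rw [← heq] at hβ2
    rcases Finset.mem_union.mp hβ2 with h | h
    · exact h
    · exfalso
      rw [Finset.mem_singleton] at h
      subst h
      exact hαn'.2 hβ
  · have hXcard : (SσS d (n-1) (σ j) ∪ {e.natAbs}).card = n := by
      rw [Finset.card_union_of_disjoint (by
        rw [Finset.disjoint_singleton_right]; exact hαn'.1)]
      rw [card_SσS d (σ j) (by omega), Finset.card_singleton]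
      omega
    have hYcard : ((SσS d (n-1) (σ j) ∪ {e.natAbs}) ∪ SσS d n (σ (j+1))).card = n + 1 :=
      hW2' n h1 h2
    -- here the subset goes the other way: SσS d (n-1) (σ j) ⊆ SσS d n (σ (j+1))
    intro β hβ
    by_contra hβn
    -- β ∈ SσS (n-1) (σ j), β ∉ SσS n (σ (j+1)); also e.natAbs ∉ SσS n (σ (j+1))
    -- counting: SσS n (σ (j+1)) has card n, adding β and e.natAbs gives ≥ n+2 > n+1
    have hcards : n + 2 ≤ ((SσS d (n-1) (σ j) ∪ {e.natAbs}) ∪ SσS d n (σ (j+1))).card := by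
      have hsub : insert β (insert e.natAbs (SσS d n (σ (j+1)))) ⊆
          (SσS d (n-1) (σ j) ∪ {e.natAbs}) ∪ SσS d n (σ (j+1)) := by
        intro γ hγ
        rcases Finset.mem_insert.mp hγ with rfl | hγ
        · exact Finset.mem_union_left _ (Finset.mem_union_left _ hβ)
        · rcases Finset.mem_insert.mp hγ with rfl | hγ
          · exact Finset.mem_union_left _ (Finset.mem_union_right _ (Finset.mem_singleton_self _))
          · exact Finset.mem_union_right _ hγ
      have hc1 : (insert β (insert e.natAbs (SσS d n (σ (j+1))))).card = n + 2 := by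
        rw [Finset.card_insert_of_notMem (by
          simp only [Finset.mem_insert]
          push_neg
          constructor
          · intro hc
            subst hc
            exact hαn'.1 hβ
          · exact hβn)]
        rw [Finset.card_insert_of_notMem hαn.2, card_SσS d (σ (j+1)) (by omega)]
      rw [← hc1]
      exact Finset.card_le_card hsub
    omega

end Stmt8Aux

/-- in a sequence of well-folded hyperorthogonal curves constructed
by inflation, `depth(σ_{k,i}, a) ≤ edgedist(A_k, v_i, a)` for every axis
`a ∈ {1,…,d}` and every vertex `v_i` of `A_k`.  (Equivalently: for every
contiguous subcurve of `A_k` spanning vertices `l,…,r` that contains `v_i` and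
an edge with axis `a`, we have `depth(σ_i, a) + 1 ≤ r − l`, i.e. the depth is at
most the number of edges of the subcurve minus one.) -/
theorem depth_le_edgedist (d k K : ℕ) (hd : 2 ≤ d) (hK : K = 2 ^ (d * k))
    (v : ℕ → Pt) (A : List Pt) (hA : A = (List.range K).map v)
    (hwf : WellFolded d A) (hkc : IsKCurve d k A) (hho : Hyperorthogonal d A)
    (σ : ℕ → SignedPerm d)
    (B : List Pt)
    (hB : B = ((List.range K).map (fun i => grayPiece d (σ i) (v i))).flatten)
    (hBvalid : IsKCurve d (k + 1) B) (hBwf : WellFolded d B)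
    (hBho : Hyperorthogonal d B) :
    ∀ a : ℤ, 1 ≤ a → a ≤ (d : ℤ) → ∀ i, i < K →
      ∀ l r, l ≤ i → i ≤ r → r < K →
        (∃ t, l ≤ t ∧ t + 1 ≤ r ∧
          ∃ e : ℤ, HasDir d (v t) (v (t + 1)) e ∧ e.natAbs = a.natAbs) →
        depth d (σ i) a + 1 ≤ r - l := by
  intro a ha1 had i hiK l r hli hir hrK hex
  obtain ⟨t, hlt, htr, e_A, heA, heAa⟩ := hex
  have hKt : t + 1 < K := by omega
  have hchain : B.Chain' (IsEdge d) := hBvalid.1.2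
  have hbf := fun (j : ℕ) (hj : j + 1 < K) =>
    boundary_facts d K hd v σ B hB hchain hBho j hj
  have hP1 : 1 ≤ 2 ^ d := Nat.one_le_two_pow
  -- B indexing (as in boundary_facts)
  have hall : ∀ x ∈ (List.range K).map (fun i => grayPiece d (σ i) (v i)), x.length = 2 ^ d := by
    intro x hx
    simp only [List.mem_map] at hx
    obtain ⟨i', _, rfl⟩ := hx
    exact grayPiece_length d (σ i') (v i')
  have hBget : ∀ i', i' < K → ∀ t', t' < 2 ^ d →
      B.getD (i' * 2 ^ d + t') ptZero = (grayPiece d (σ i') (v i')).getD t' ptZero := by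
    intro i' hi t' htP
    rw [hB, flatten_getD _ _ hall i' t' ptZero (by simpa using hi) htP]
    congr 1
    rw [List.getD_eq_getElem _ _ (by simpa using hi), List.getElem_map, List.getElem_range]
  -- axis as a natural number
  set aN := a.natAbs with haNdef
  have haN1 : 1 ≤ aN := by omega
  have haNd : aN ≤ d := by omega
  have haa : ((aN : ℕ) : ℤ) = a := by omega
  -- depth case analysis
  simp only [depth]
  by_cases h0 : ((σ i).inv a).natAbs = d ∨ ((σ i).inv a).natAbs = d - 1
  · rw [if_pos h0]
    omega
  · rw [if_neg h0]
    push_neg at h0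
    have hdir_a : IsDir d a := ⟨by omega, by omega⟩
    have hdu := (σ i).maps_inv a hdir_a
    set m := ((σ i).inv a).natAbs with hmdef
    have hm1 : 1 ≤ m := by have := hdu.1; omega
    have hmd : m ≤ d - 2 := by have := hdu.2; omega
    have hd3 : 3 ≤ d := by omega
    -- the connecting edge at boundary t has axis aN
    obtain ⟨αt, hαsing, hαnotin, _⟩ := hbf t hKt
    have hαt : αt = aN := by
      have hidx1 : (t + 1) * 2 ^ d - 1 = t * 2 ^ d + (2 ^ d - 1) := by
        have : (t + 1) * 2 ^ d = t * 2 ^ d + 2 ^ d := by ring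
        omega
      have hw1 : B.getD ((t + 1) * 2 ^ d - 1) ptZero =
          (grayPiece d (σ t) (v t)).getD (2 ^ d - 1) ptZero := by
        rw [hidx1]
        exact hBget t (by omega) _ (by omega)
      have hw2 : B.getD ((t + 1) * 2 ^ d) ptZero =
          (grayPiece d (σ (t + 1)) (v (t + 1))).getD 0 ptZero := by
        rw [show (t + 1) * 2 ^ d = (t + 1) * 2 ^ d + 0 by ring]
        exact hBget (t + 1) (by omega) 0 (by omega)
      have hc1 := grayPiece_coord d (σ t) (v t) (2 ^ d - 1) (le_refl _) aN haN1 haNd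
      have hc2 := grayPiece_coord d (σ (t + 1)) (v (t + 1)) 0 (by omega) aN haN1 haNd
      have hva : v (t + 1) aN = v t aN + e_A.sign := by
        rw [heA.2]
        show move (v t) e_A aN = _
        rw [move]
        rw [if_pos (by omega : aN = e_A.natAbs)]
      have hsgn : e_A.sign = 1 ∨ e_A.sign = -1 := by
        rcases lt_or_gt_of_ne heA.1.1 with h | h
        · right; exact Int.sign_eq_neg_one_iff_neg.mpr h
        · left; exact Int.sign_eq_one_iff_pos.mpr h
      have hne : B.getD ((t + 1) * 2 ^ d - 1) ptZero aN ≠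
          B.getD ((t + 1) * 2 ^ d) ptZero aN := by
        rw [hw1, hw2]
        omega
      have hmem : aN ∈ axesOfEdge d (B.getD ((t + 1) * 2 ^ d - 1) ptZero)
          (B.getD ((t + 1) * 2 ^ d) ptZero) := by
        simp only [axesOfEdge, Finset.mem_filter, Finset.mem_range]
        exact ⟨by omega, hne⟩
      rw [hαsing, Finset.mem_singleton] at hmem
      exact hmem.symm
    subst hαt
    -- the two directional chains
    have hright : i ≤ t → i + (d - 1 - m) ≤ t := by
      intro hit
      by_contra hcon
      push_neg at hcon
      have hq : t - i ≤ d - 2 - m := by omega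
      have claim : ∀ jj, jj ≤ t - i →
          ((σ (i + jj)).inv ((aN : ℕ) : ℤ)).natAbs ≤ m + jj ∧
          1 ≤ ((σ (i + jj)).inv ((aN : ℕ) : ℤ)).natAbs := by
        intro jj
        induction jj with
        | zero =>
          intro _
          simp only [Nat.add_zero]
          rw [haa]
          omega
        | succ jj ih =>
          intro hjj
          have hprev := ih (by omega)
          have hmem : aN ∈ SσS d (m + jj) (σ (i + jj)) :=
            (mem_SσS d (σ (i + jj)) haN1 haNd (by omega)).mpr ⟨hprev.1, hprev.2⟩
          obtain ⟨α', _, _, hsub⟩ := hbf (i + jj) (by omega)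
          have hsub2 := (hsub (m + jj + 1) (by omega) (by omega)).2
          rw [show m + jj + 1 - 1 = m + jj by omega] at hsub2
          have hmem2 : aN ∈ SσS d (m + jj + 1) (σ (i + jj + 1)) := hsub2 hmem
          have := (mem_SσS d (σ (i + jj + 1)) haN1 haNd (by omega)).mp hmem2
          constructor
          · have h1 : i + (jj + 1) = i + jj + 1 := by omega
            rw [h1]
            omega
          · have h1 : i + (jj + 1) = i + jj + 1 := by omega
            rw [h1]
            omega
      have hfin := claim (t - i) (le_refl _)
      rw [show i + (t - i) = t by omega] at hfin
      have hmemt : aN ∈ SσS d (d - 2) (σ t) := by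
        apply SσS_mono d (σ t) (show m + (t - i) ≤ d - 2 by omega)
        exact (mem_SσS d (σ t) haN1 haNd (by omega)).mpr ⟨hfin.1, hfin.2⟩
      exact (hαnotin (d - 2) (by omega) (le_refl _)).1 hmemt
    have hleft : t + 1 ≤ i → t + 1 + (d - 1 - m) ≤ i := by
      intro hit
      by_contra hcon
      push_neg at hcon
      have hq : i - (t + 1) ≤ d - 2 - m := by omega
      have claim : ∀ jj, jj ≤ i - (t + 1) →
          ((σ (i - jj)).inv ((aN : ℕ) : ℤ)).natAbs ≤ m + jj ∧
          1 ≤ ((σ (i - jj)).inv ((aN : ℕ) : ℤ)).natAbs := by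
        intro jj
        induction jj with
        | zero =>
          intro _
          simp only [Nat.sub_zero]
          rw [haa]
          omega
        | succ jj ih =>
          intro hjj
          have hprev := ih (by omega)
          have hmem : aN ∈ SσS d (m + jj) (σ (i - jj)) :=
            (mem_SσS d (σ (i - jj)) haN1 haNd (by omega)).mpr ⟨hprev.1, hprev.2⟩
          obtain ⟨α', _, _, hsub⟩ := hbf (i - jj - 1) (by omega)
          have hsub1 := (hsub (m + jj + 1) (by omega) (by omega)).1
          rw [show m + jj + 1 - 1 = m + jj by omega,
            show i - jj - 1 + 1 = i - jj by omega] at hsub1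
          have hmem2 : aN ∈ SσS d (m + jj + 1) (σ (i - jj - 1)) := hsub1 hmem
          have := (mem_SσS d (σ (i - jj - 1)) haN1 haNd (by omega)).mp hmem2
          constructor
          · have h1 : i - (jj + 1) = i - jj - 1 := by omega
            rw [h1]
            omega
          · have h1 : i - (jj + 1) = i - jj - 1 := by omega
            rw [h1]
            omega
      have hfin := claim (i - (t + 1)) (le_refl _)
      rw [show i - (i - (t + 1)) = t + 1 by omega] at hfin
      have hmemt : aN ∈ SσS d (d - 2) (σ (t + 1)) := by
        apply SσS_mono d (σ (t + 1)) (show m + (i - (t + 1)) ≤ d - 2 by omega)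
        exact (mem_SσS d (σ (t + 1)) haN1 haNd (by omega)).mpr ⟨hfin.1, hfin.2⟩
      exact (hαnotin (d - 2) (by omega) (le_refl _)).2 hmemt
    rcases le_or_gt i t with hit | hit
    · have := hright hit
      omega
    · have := hleft (by omega)
      omega
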